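/- If Y is a nonnegative random variable with Var(Y) ≤ δ·(E[Y])² for some δ ≥ 0 and the second derivative of x ↦ x^{3/2} is bounded by Λ = (3/4)(inf supp Y)^{−1/2} on the support of Y, with inf supp Y ≥ c·E[Y] for some c > 0, then E[Y^{3/2}] ≤ (1 + 3δ/(8√c))·(E[Y])^{3/2}. -/

import Mathlib

open MeasureTheory

lemma r32 (x : ℝ) (hx : 0 ≤ x) : x ^ (3/2 : ℝ) = Real.sqrt x ^ 3 := by
  rw [Real.sqrt_eq_rpow, ← Real.rpow_natCast (x ^ (1/2 : ℝ)) 3, ← Real.rpow_mul hx]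
  norm_num

lemma key_cube (a b s : ℝ) (hs : 0 < s) (ha : s ≤ a) (hb : s ≤ b) :
    a^3 ≤ b^3 + 3/2 * b * (a^2 - b^2) + 3/(8*s) * (a^2 - b^2)^2 := by
  have h8 : (0:ℝ) < 8*s := by positivity
  have ha0 : 0 ≤ a := hs.le.trans ha
  have hb0 : 0 ≤ b := hs.le.trans hb
  have H : a^3 - (b^3 + 3/2 * b * (a^2 - b^2)) ≤ 3*(a^2 - b^2)^2/(8*s) := by
    rw [le_div_iff₀ h8]
    nlinarith [mul_nonneg (sq_nonneg (a-b)) (mul_nonneg ha0 (sub_nonneg.2 hb)),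
      mul_nonneg (sq_nonneg (a-b)) (mul_nonneg hb0 (sub_nonneg.2 ha)),
      sq_nonneg ((a-b)^2)]
  have e : 3/(8*s) * (a^2 - b^2)^2 = 3*(a^2 - b^2)^2/(8*s) := by ring
  linarith

lemma key_ineq (x M s : ℝ) (hs : 0 < s) (hx : s^2 ≤ x) (hM : s^2 ≤ M) :
    x ^ (3/2 : ℝ) ≤ M ^ (3/2 : ℝ) + 3/2 * Real.sqrt M * (x - M) +
      3 / (8*s) * (x - M)^2 := by
  have hs2 : (0:ℝ) < s^2 := by positivity
  have hx0 : 0 ≤ x := le_trans hs2.le hx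
  have hM0 : 0 ≤ M := le_trans hs2.le hM
  have hsa : s ≤ Real.sqrt x := by
    have := Real.sqrt_le_sqrt hx
    rwa [Real.sqrt_sq hs.le] at this
  have hsb : s ≤ Real.sqrt M := by
    have := Real.sqrt_le_sqrt hM
    rwa [Real.sqrt_sq hs.le] at this
  have h := key_cube (Real.sqrt x) (Real.sqrt M) s hs hsa hsb
  rw [Real.sq_sqrt hx0, Real.sq_sqrt hM0] at h
  rw [r32 x hx0, r32 M hM0]
  exact h

/-- if `Y ≥ 0`, `Var(Y) ≤ δ(E[Y])²` for some `δ ≥ 0`, and the (essential)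
infimum of the support of `Y` is at least `c·E[Y]` with `c > 0` (so that the second
derivative of `x ↦ x^{3/2}` is bounded by `Λ = (3/4)(inf supp Y)^{−1/2}` on the support),
then `E[Y^{3/2}] ≤ (1 + 3δ/(8√c))·(E[Y])^{3/2}`. -/
theorem stmt_4 {Ω : Type*} [MeasurableSpace Ω] (μ : Measure Ω) [IsProbabilityMeasure μ]
    (Y : Ω → ℝ) (δ c : ℝ) (hδ : 0 ≤ δ) (hc : 0 < c)
    (hY0 : ∀ ω, 0 ≤ Y ω)
    (hYmeas : Measurable Y)
    (hYint : Integrable Y μ)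
    (hY2int : Integrable (fun ω => (Y ω) ^ 2) μ)
    (hY32int : Integrable (fun ω => (Y ω) ^ (3 / 2 : ℝ)) μ)
    (hmean : 0 < ∫ ω, Y ω ∂μ)
    (hvar : (∫ ω, (Y ω) ^ 2 ∂μ) - (∫ ω, Y ω ∂μ) ^ 2 ≤ δ * (∫ ω, Y ω ∂μ) ^ 2)
    (hinf : ∀ᵐ ω ∂μ, c * (∫ ω', Y ω' ∂μ) ≤ Y ω) :
    ∫ ω, (Y ω) ^ (3 / 2 : ℝ) ∂μ ≤
      (1 + 3 * δ / (8 * Real.sqrt c)) * (∫ ω, Y ω ∂μ) ^ (3 / 2 : ℝ) := by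
  set M := ∫ ω, Y ω ∂μ with hMdef
  have hcM : 0 < c * M := by positivity
  set s := Real.sqrt (c * M) with hsdef
  have hs : 0 < s := Real.sqrt_pos.2 hcM
  have hs2 : s^2 = c * M := Real.sq_sqrt hcM.le
  have hMge : c * M ≤ M := by
    have h := integral_mono_ae (integrable_const (c * M)) hYint hinf
    simpa using h
  have hae : ∀ᵐ ω ∂μ, (Y ω) ^ (3/2 : ℝ) ≤
      M ^ (3/2 : ℝ) + 3/2 * Real.sqrt M * (Y ω - M) + 3 / (8*s) * (Y ω - M)^2 := by
    filter_upwards [hinf] with ω h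
    exact key_ineq (Y ω) M s hs (by rw [hs2]; exact h) (by rw [hs2]; exact hMge)
  -- integrability pieces
  have h2M : Integrable (fun ω => (2*M) * Y ω) μ := hYint.const_mul _
  have hsub : Integrable (fun ω => (Y ω)^2 - (2*M) * Y ω) μ := hY2int.sub h2M
  have hsq : Integrable (fun ω => (Y ω - M)^2) μ := by
    have heq : (fun ω => (Y ω - M)^2) = fun ω => ((Y ω)^2 - (2*M) * Y ω) + M^2 := by
      funext ω; ring
    rw [heq]
    exact hsub.add (integrable_const _)
  have hlin : Integrable (fun ω => Y ω - M) μ := hYint.sub (integrable_const M)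
  have hlin' : Integrable (fun ω => 3/2 * Real.sqrt M * (Y ω - M)) μ := hlin.const_mul _
  have hquad : Integrable (fun ω => 3/(8*s) * (Y ω - M)^2) μ := hsq.const_mul _
  have hca : Integrable (fun ω => M ^ (3/2 : ℝ) + 3/2 * Real.sqrt M * (Y ω - M)) μ :=
    (integrable_const _).add hlin'
  have hg : Integrable (fun ω => M ^ (3/2 : ℝ) + 3/2 * Real.sqrt M * (Y ω - M)
      + 3/(8*s) * (Y ω - M)^2) μ := hca.add hquad
  have hmono := integral_mono_ae hY32int hg hae
  have e1 : ∫ ω, (Y ω - M) ∂μ = 0 := by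
    rw [integral_sub hYint (integrable_const M)]
    simp [hMdef]
  have e2 : ∫ ω, (Y ω - M)^2 ∂μ = (∫ ω, (Y ω)^2 ∂μ) - M^2 := by
    calc ∫ ω, (Y ω - M)^2 ∂μ
        = ∫ ω, (((Y ω)^2 - (2*M) * Y ω) + M^2) ∂μ := by congr 1; funext ω; ring
      _ = (∫ ω, ((Y ω)^2 - (2*M) * Y ω) ∂μ) + ∫ _ω, (M^2 : ℝ) ∂μ :=
          integral_add hsub (integrable_const _)
      _ = ((∫ ω, (Y ω)^2 ∂μ) - ∫ ω, (2*M) * Y ω ∂μ) + M^2 := by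
          rw [integral_sub hY2int h2M]; simp
      _ = (∫ ω, (Y ω)^2 ∂μ) - M^2 := by
          rw [integral_const_mul, ← hMdef]; ring
  have egrand : ∫ ω, (M ^ (3/2 : ℝ) + 3/2 * Real.sqrt M * (Y ω - M)
      + 3/(8*s) * (Y ω - M)^2) ∂μ
      = M ^ (3/2 : ℝ) + 3/(8*s) * ((∫ ω, (Y ω)^2 ∂μ) - M^2) := by
    calc ∫ ω, (M ^ (3/2 : ℝ) + 3/2 * Real.sqrt M * (Y ω - M) + 3/(8*s) * (Y ω - M)^2) ∂μ
        = (∫ ω, (M ^ (3/2 : ℝ) + 3/2 * Real.sqrt M * (Y ω - M)) ∂μ)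
          + ∫ ω, 3/(8*s) * (Y ω - M)^2 ∂μ := integral_add hca hquad
      _ = ((∫ _ω, (M ^ (3/2:ℝ)) ∂μ) + ∫ ω, 3/2 * Real.sqrt M * (Y ω - M) ∂μ)
          + ∫ ω, 3/(8*s) * (Y ω - M)^2 ∂μ := by
          rw [integral_add (integrable_const _) hlin']
      _ = M ^ (3/2 : ℝ) + 3/(8*s) * ((∫ ω, (Y ω)^2 ∂μ) - M^2) := by
          rw [integral_const_mul, integral_const_mul, e1, e2, integral_const]
          simp
  rw [egrand] at hmono
  have hfin : 3/(8*s) * ((∫ ω, (Y ω)^2 ∂μ) - M^2) ≤ 3 * δ / (8 * Real.sqrt c) * M ^ (3/2 : ℝ) := by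
    have step1 : 3/(8*s) * ((∫ ω, (Y ω)^2 ∂μ) - M^2) ≤ 3/(8*s) * (δ * M^2) :=
      mul_le_mul_of_nonneg_left hvar (by positivity)
    refine step1.trans_eq ?_
    set r := Real.sqrt M with hrdef
    have hr0 : 0 < r := Real.sqrt_pos.2 hmean
    have hrM : r^2 = M := Real.sq_sqrt hmean.le
    have hsc : s = Real.sqrt c * r := Real.sqrt_mul hc.le M
    have hc0 : 0 < Real.sqrt c := Real.sqrt_pos.2 hc
    have hM32 : M ^ (3/2 : ℝ) = r^3 := r32 M hmean.le
    have hM2 : M^2 = r^4 := by rw [← hrM]; ring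
    rw [hsc, hM32, hM2]
    field_simp
  calc ∫ ω, (Y ω) ^ (3/2 : ℝ) ∂μ
      ≤ M ^ (3/2 : ℝ) + 3/(8*s) * ((∫ ω, (Y ω)^2 ∂μ) - M^2) := hmono
    _ ≤ M ^ (3/2 : ℝ) + 3 * δ / (8 * Real.sqrt c) * M ^ (3/2 : ℝ) := by linarith
    _ = (1 + 3 * δ / (8 * Real.sqrt c)) * M ^ (3/2 : ℝ) := by ring
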